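/- Let A⁺, A⁻ : ℝ → ℝ and u⁺, u⁻, û, c ∈ ℝ. Assume the Rankine–Hugoniot condition A⁺(u⁺) = A⁻(u⁻) and that the Kruzkov entropy inequality holds at c. Then: (iii) if u⁻ ≤ û < c < u⁺, then A⁺(u⁺) ≤ A⁺(c); (iv) if u⁻ < c < û ≤ u⁺, then A⁻(u⁻) ≤ A⁻(c). -/
import Mathlib


open MeasureTheory Filter Set

/-- The Kruzkov entropy inequality at `c` for data `(um, up, uh)`:
`A⁺(u⁺)·sign(u⁺−c) − 2·sign(u⁺−û)·A⁺(c)·𝟙_{(û,u⁺)}(c) ≤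
 A⁻(u⁻)·sign(u⁻−c) − 2·sign(u⁻−û)·A⁻(c)·𝟙_{(û,u⁻)}(c)`. -/
def KruzkovIneq (Ap Am : ℝ → ℝ) (um up uh c : ℝ) : Prop :=
  Ap up * Real.sign (up - c) -
      2 * Real.sign (up - uh) * Ap c * Set.indicator (Set.uIoo uh up) (1 : ℝ → ℝ) c
    ≤ Am um * Real.sign (um - c) -
      2 * Real.sign (um - uh) * Am c * Set.indicator (Set.uIoo uh um) (1 : ℝ → ℝ) c

theorem stmt_13 (Ap Am : ℝ → ℝ) (up um uh c : ℝ)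
    (hRH : Ap up = Am um)
    (hkruz : KruzkovIneq Ap Am um up uh c) :
    (um ≤ uh → uh < c → c < up → Ap up ≤ Ap c) ∧
    (um < c → c < uh → uh ≤ up → Am um ≤ Am c) := by
  unfold KruzkovIneq at hkruz
  constructor
  · intro h1 h2 h3
    have s1 : Real.sign (up - c) = 1 := Real.sign_of_pos (by linarith)
    have s2 : Real.sign (up - uh) = 1 := Real.sign_of_pos (by linarith)
    have s3 : Real.sign (um - c) = -1 := Real.sign_of_neg (by linarith)
    have i1 : Set.indicator (Set.uIoo uh up) (1 : ℝ → ℝ) c = 1 :=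
      Set.indicator_of_mem (Set.mem_uIoo_of_lt h2 h3) _
    have i2 : Set.indicator (Set.uIoo uh um) (1 : ℝ → ℝ) c = 0 := by
      apply Set.indicator_of_notMem
      rw [Set.uIoo_of_ge h1]
      intro hc; exact absurd hc.2 (by linarith)
    rw [s1, s2, s3, i1, i2] at hkruz
    nlinarith [hkruz]
  · intro h1 h2 h3
    have s1 : Real.sign (up - c) = 1 := Real.sign_of_pos (by linarith)
    have s2 : Real.sign (um - c) = -1 := Real.sign_of_neg (by linarith)
    have s3 : Real.sign (um - uh) = -1 := Real.sign_of_neg (by linarith)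
    have i1 : Set.indicator (Set.uIoo uh up) (1 : ℝ → ℝ) c = 0 := by
      apply Set.indicator_of_notMem
      rw [Set.uIoo_of_le h3]
      intro hc; exact absurd hc.1 (by linarith)
    have i2 : Set.indicator (Set.uIoo uh um) (1 : ℝ → ℝ) c = 1 :=
      Set.indicator_of_mem (Set.mem_uIoo_of_gt h1 h2) _
    rw [s1, s2, s3, i1, i2] at hkruz
    nlinarith [hkruz]
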